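/- Let E be a real inner product space, ν_x, ν_y, w unit vectors, d, H, δ > 0, ξ ∈ E with ⟨ξ, ν_y⟩ = 0, and suppose ν_x + (dH/δ)w − (1/δ)ξ = ρ ν_y for some ρ ∈ ℝ. Let Z = (H/2)d² + δd⟨w, ν_x⟩. Then ρ² = 1 + (2H/δ²)Z − (1/δ²)‖ξ‖², and in particular if Z ≥ 0 and ‖ξ‖² ≤ 2HZ then ρ² ≥ 1. -/
import Mathlib


open InnerProductSpace

theorem stmt_15 {E : Type*} [NormedAddCommGroup E] [InnerProductSpace ℝ E]
    (νx νy w : E) (hνx : ‖νx‖ = 1) (hνy : ‖νy‖ = 1) (hw : ‖w‖ = 1)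
    (d H δ : ℝ) (hd : 0 < d) (hH : 0 < H) (hδ : 0 < δ)
    (ξ : E) (hξ : ⟪ξ, νy⟫_ℝ = 0) (ρ : ℝ)
    (hrel : νx + (d * H / δ) • w - (1 / δ) • ξ = ρ • νy)
    (Z : ℝ) (hZ : Z = (H / 2) * d ^ 2 + δ * d * ⟪w, νx⟫_ℝ) :
    ρ ^ 2 = 1 + (2 * H / δ ^ 2) * Z - (1 / δ ^ 2) * ‖ξ‖ ^ 2 ∧
      (0 ≤ Z → ‖ξ‖ ^ 2 ≤ 2 * H * Z → 1 ≤ ρ ^ 2) := by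
  have hδ0 : δ ≠ 0 := ne_of_gt hδ
  have h1 : ⟪νx + (d * H / δ) • w - (1 / δ) • ξ, ξ⟫_ℝ = 0 := by
    rw [hrel, real_inner_smul_left, real_inner_comm, hξ, mul_zero]
  have key : ρ * ρ = ⟪νx + (d * H / δ) • w - (1 / δ) • ξ,
      νx + (d * H / δ) • w - (1 / δ) • ξ⟫_ℝ := by
    rw [hrel, real_inner_smul_left, real_inner_smul_right,
      real_inner_self_eq_norm_sq, hνy]; ring
  have e1 : ‖(d * H / δ) • w‖ ^ 2 = (d * H / δ) ^ 2 := by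
    rw [norm_smul, hw, mul_one, Real.norm_eq_abs, sq_abs]
  have e2 : ‖(1 / δ) • ξ‖ ^ 2 = (1 / δ) ^ 2 * ‖ξ‖ ^ 2 := by
    rw [norm_smul, mul_pow, Real.norm_eq_abs, sq_abs]
  simp only [inner_sub_left, inner_sub_right, inner_add_left, inner_add_right,
    real_inner_smul_left, real_inner_smul_right, real_inner_self_eq_norm_sq,
    hνx, hw, e1, e2, one_pow] at key h1
  rw [real_inner_comm w νx] at key
  have hcw : ⟪νx, w⟫_ℝ = ⟪w, νx⟫_ℝ := real_inner_comm w νx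
  have hcξ : ⟪ξ, νx⟫_ℝ = ⟪νx, ξ⟫_ℝ := real_inner_comm νx ξ
  have hcwξ : ⟪ξ, w⟫_ℝ = ⟪w, ξ⟫_ℝ := real_inner_comm w ξ
  rw [hcξ, hcwξ] at key
  have main : ρ ^ 2 = 1 + (2 * H / δ ^ 2) * Z - (1 / δ ^ 2) * ‖ξ‖ ^ 2 := by
    have hinv : δ * δ⁻¹ = 1 := mul_inv_cancel₀ hδ0
    rw [hZ, pow_two]
    linear_combination key - (2 / δ) * h1 - (2 * d * H * δ⁻¹ * ⟪w, νx⟫_ℝ) * hinv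
  refine ⟨main, fun hZ0 hle => ?_⟩
  rw [main]
  have h3 : 0 ≤ 2 * H * Z - ‖ξ‖ ^ 2 := by linarith
  have hδ2 : (0:ℝ) < δ ^ 2 := by positivity
  have h4 : (2 * H * Z - ‖ξ‖ ^ 2) / δ ^ 2 = 2 * H / δ ^ 2 * Z - 1 / δ ^ 2 * ‖ξ‖ ^ 2 := by
    field_simp
  linarith [div_nonneg h3 hδ2.le, h4]
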